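/- Let p_1,…,p_m and q_1,…,q_k be polynomials in ℂ[x_1,…,x_n]. If the quotient algebras ℂ[x_1,…,x_n]/⟨p_1,…,p_m⟩ and ℂ[x_1,…,x_n]/⟨q_1,…,q_k⟩ are isomorphic as ℂ-algebras, then there exists a ℂ-algebra automorphism σ of the polynomial ring ℂ[x_1,…,x_{2n}] in 2n variables such that σ maps the ideal ⟨p_1,…,p_m, x_{n+1},…,x_{2n}⟩ onto the ideal ⟨q_1,…,q_k, x_{n+1},…,x_{2n}⟩ (where p_i and q_j are regarded as polynomials in the first n variables). -/

import Mathlib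

open MvPolynomial

lemma aeval_rename_eq {σ τ υ : Type*} (e : σ → τ) (F : τ → MvPolynomial υ ℂ) (e' : σ → υ)
    (hF : ∀ i, F (e i) = X (e' i)) (h : MvPolynomial σ ℂ) :
    aeval F (rename e h) = rename e' h := by
  rw [aeval_rename, show (F ∘ e) = fun i => X (e' i) from funext hF]
  change aeval (X ∘ e') h = _; rw [← aeval_rename, aeval_X_left_apply]

lemma aeval_elim_rename_inr {n : ℕ} (a : Fin n → MvPolynomial (Fin n ⊕ Fin n) ℂ)
    (h : MvPolynomial (Fin n) ℂ) :
    aeval (Sum.elim a (fun i => X (Sum.inr i))) (rename Sum.inr h) = rename Sum.inr h :=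
  aeval_rename_eq Sum.inr (Sum.elim a (fun i => X (Sum.inr i))) Sum.inr (fun _ => rfl) h

lemma aeval_elim_rename_inl {n : ℕ} (b : Fin n → MvPolynomial (Fin n ⊕ Fin n) ℂ)
    (h : MvPolynomial (Fin n) ℂ) :
    aeval (Sum.elim (fun i => X (Sum.inl i)) b) (rename Sum.inl h) = rename Sum.inl h :=
  aeval_rename_eq Sum.inl (Sum.elim (fun i => X (Sum.inl i)) b) Sum.inl (fun _ => rfl) h

/-- Shear automorphism modifying the `inl` variables: `x_i ↦ x_i - g_i(y)`. -/
noncomputable def shearL {n : ℕ} (g : Fin n → MvPolynomial (Fin n) ℂ) :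
    MvPolynomial (Fin n ⊕ Fin n) ℂ ≃ₐ[ℂ] MvPolynomial (Fin n ⊕ Fin n) ℂ :=
  AlgEquiv.ofAlgHom
    (aeval (Sum.elim (fun i => X (Sum.inl i) - rename Sum.inr (g i)) (fun i => X (Sum.inr i))))
    (aeval (Sum.elim (fun i => X (Sum.inl i) + rename Sum.inr (g i)) (fun i => X (Sum.inr i))))
    (by apply algHom_ext; rintro (i|i) <;>
        simp only [AlgHom.comp_apply, aeval_X, AlgHom.id_apply, Sum.elim_inl, Sum.elim_inr,
          map_add, map_sub, aeval_elim_rename_inr] <;> ring)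
    (by apply algHom_ext; rintro (i|i) <;>
        simp only [AlgHom.comp_apply, aeval_X, AlgHom.id_apply, Sum.elim_inl, Sum.elim_inr,
          map_add, map_sub, aeval_elim_rename_inr] <;> ring)

/-- Shear automorphism modifying the `inr` variables: `y_i ↦ y_i + f_i(x)`. -/
noncomputable def shearR {n : ℕ} (f : Fin n → MvPolynomial (Fin n) ℂ) :
    MvPolynomial (Fin n ⊕ Fin n) ℂ ≃ₐ[ℂ] MvPolynomial (Fin n ⊕ Fin n) ℂ :=
  AlgEquiv.ofAlgHom
    (aeval (Sum.elim (fun i => X (Sum.inl i)) (fun i => X (Sum.inr i) + rename Sum.inl (f i))))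
    (aeval (Sum.elim (fun i => X (Sum.inl i)) (fun i => X (Sum.inr i) - rename Sum.inl (f i))))
    (by apply algHom_ext; rintro (i|i) <;>
        simp only [AlgHom.comp_apply, aeval_X, AlgHom.id_apply, Sum.elim_inl, Sum.elim_inr,
          map_add, map_sub, aeval_elim_rename_inl] <;> ring)
    (by apply algHom_ext; rintro (i|i) <;>
        simp only [AlgHom.comp_apply, aeval_X, AlgHom.id_apply, Sum.elim_inl, Sum.elim_inr,
          map_add, map_sub, aeval_elim_rename_inl] <;> ring)

@[simp] lemma shearL_X_inl {n : ℕ} (g : Fin n → MvPolynomial (Fin n) ℂ) (i : Fin n) :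
    shearL g (X (Sum.inl i)) = X (Sum.inl i) - rename Sum.inr (g i) := by
  simp [shearL]

@[simp] lemma shearL_rename_inr {n : ℕ} (g : Fin n → MvPolynomial (Fin n) ℂ)
    (h : MvPolynomial (Fin n) ℂ) : shearL g (rename Sum.inr h) = rename Sum.inr h :=
  aeval_elim_rename_inr _ h

@[simp] lemma shearR_rename_inl {n : ℕ} (f : Fin n → MvPolynomial (Fin n) ℂ)
    (h : MvPolynomial (Fin n) ℂ) : shearR f (rename Sum.inl h) = rename Sum.inl h :=
  aeval_elim_rename_inl _ h

@[simp] lemma shearR_X_inr {n : ℕ} (f : Fin n → MvPolynomial (Fin n) ℂ) (i : Fin n) :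
    shearR f (X (Sum.inr i)) = X (Sum.inr i) + rename Sum.inl (f i) := by
  simp [shearR]

lemma aeval_sub_mem {S : Type*} [CommRing S] [Algebra ℂ S] {n : ℕ} (u v : Fin n → S)
    (h : MvPolynomial (Fin n) ℂ) :
    aeval u h - aeval v h ∈ Ideal.span (Set.range fun i => u i - v i) := by
  induction h using MvPolynomial.induction_on with
  | C a => simp
  | add r s hr hs =>
      have : aeval u (r + s) - aeval v (r + s)
          = (aeval u r - aeval v r) + (aeval u s - aeval v s) := by
        simp only [map_add]; ring
      rw [this]; exact add_mem hr hs
  | mul_X r i hr =>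
      have : aeval u (r * X i) - aeval v (r * X i)
          = aeval u r * (u i - v i) + (aeval u r - aeval v r) * v i := by
        simp only [map_mul, aeval_X]; ring
      rw [this]
      exact add_mem (Ideal.mul_mem_left _ _ (Ideal.subset_span ⟨i, rfl⟩))
        (Ideal.mul_mem_right _ _ hr)

lemma span_le_aux {n m k : ℕ} (e₁ e₂ : Fin n → Fin n ⊕ Fin n)
    (p : Fin m → MvPolynomial (Fin n) ℂ) (q : Fin k → MvPolynomial (Fin n) ℂ)
    (f g : Fin n → MvPolynomial (Fin n) ℂ)
    (h1 : ∀ j, aeval f (p j) ∈ Ideal.span (Set.range q))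
    (h2 : ∀ i, aeval f (g i) - X i ∈ Ideal.span (Set.range q)) :
    Ideal.span (Set.range (fun j => rename e₂ (p j)) ∪
      Set.range (fun i => X (e₁ i) - rename e₂ (g i)))
    ≤ Ideal.span (Set.range (fun j => rename e₁ (q j)) ∪
      Set.range (fun i => (X (e₂ i) : MvPolynomial (Fin n ⊕ Fin n) ℂ) - rename e₁ (f i))) := by
  set R := Ideal.span (Set.range (fun j => rename e₁ (q j)) ∪
      Set.range (fun i => (X (e₂ i) : MvPolynomial (Fin n ⊕ Fin n) ℂ) - rename e₁ (f i)))
  have hq : ∀ a ∈ Ideal.span (Set.range q), rename e₁ a ∈ R := by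
    intro a ha
    have := Ideal.mem_map_of_mem (rename e₁).toRingHom ha
    rw [Ideal.map_span, ← Set.range_comp] at this
    refine Ideal.span_mono ?_ this
    exact Set.Subset.trans (by exact Set.Subset.rfl) Set.subset_union_left
  have hsub : ∀ h : MvPolynomial (Fin n) ℂ,
      rename e₂ h - rename e₁ (aeval f h) ∈ R := by
    intro h
    have key : rename e₂ h = aeval (fun i => X (e₂ i)) h := by
      change _ = aeval (X ∘ e₂) h; rw [← aeval_rename, aeval_X_left_apply]
    have key2 : rename e₁ (aeval f h) = aeval (fun i => rename e₁ (f i)) h := by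
      rw [← comp_aeval]; rfl
    rw [key, key2]
    refine Ideal.span_mono Set.subset_union_right ?_
    exact aeval_sub_mem _ _ h
  rw [Ideal.span_le]
  refine Set.union_subset ?_ ?_
  · rintro x ⟨j, rfl⟩
    show rename e₂ (p j) ∈ R
    have : rename e₂ (p j)
        = (rename e₂ (p j) - rename e₁ (aeval f (p j))) + rename e₁ (aeval f (p j)) := by ring
    rw [this]
    exact add_mem (hsub (p j)) (hq _ (h1 j))
  · rintro x ⟨i, rfl⟩
    show (X (e₁ i) : MvPolynomial (Fin n ⊕ Fin n) ℂ) - rename e₂ (g i) ∈ R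
    have expand : (X (e₁ i) : MvPolynomial (Fin n ⊕ Fin n) ℂ) - rename e₂ (g i)
        = -(rename e₂ (g i) - rename e₁ (aeval f (g i)))
          - rename e₁ (aeval f (g i) - X i) := by
      simp only [map_sub, rename_X]; ring
    rw [expand]
    exact sub_mem (neg_mem (hsub (g i))) (hq _ (h2 i))

lemma ideal_map_trans {R : Type*} [CommRing R] [Algebra ℂ R] (e₁ e₂ : R ≃ₐ[ℂ] R) (I : Ideal R) :
    Ideal.map (e₁.trans e₂) I = Ideal.map e₂ (Ideal.map e₁ I) := by
  rw [show Ideal.map e₁ I = Ideal.span (⇑e₁ '' ↑I) from rfl, Ideal.map_span, ← Set.image_comp,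
    ← AlgEquiv.coe_trans]
  rfl

theorem stable_equivalence (n m k : ℕ)
    (p : Fin m → MvPolynomial (Fin n) ℂ) (q : Fin k → MvPolynomial (Fin n) ℂ)
    (h : Nonempty ((MvPolynomial (Fin n) ℂ ⧸ Ideal.span (Set.range p)) ≃ₐ[ℂ]
        (MvPolynomial (Fin n) ℂ ⧸ Ideal.span (Set.range q)))) :
    ∃ σ : MvPolynomial (Fin n ⊕ Fin n) ℂ ≃ₐ[ℂ] MvPolynomial (Fin n ⊕ Fin n) ℂ,
      Ideal.map σ
        (Ideal.span
          (Set.range (fun i => rename (Sum.inl : Fin n → Fin n ⊕ Fin n) (p i)) ∪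
           Set.range (fun i : Fin n => (X (Sum.inr i) : MvPolynomial (Fin n ⊕ Fin n) ℂ)))) =
      Ideal.span
        (Set.range (fun i => rename (Sum.inl : Fin n → Fin n ⊕ Fin n) (q i)) ∪
         Set.range (fun i : Fin n => (X (Sum.inr i) : MvPolynomial (Fin n ⊕ Fin n) ℂ))) := by
  classical
  obtain ⟨φ⟩ := h
  set P := Ideal.span (Set.range p) with hPdef
  set Q := Ideal.span (Set.range q) with hQdef
  choose f hf using fun i => Ideal.Quotient.mk_surjective (φ (Ideal.Quotient.mk P (X i)))
  choose g hg using fun i => Ideal.Quotient.mk_surjective (φ.symm (Ideal.Quotient.mk Q (X i)))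
  have hφ : ∀ a : MvPolynomial (Fin n) ℂ,
      φ (Ideal.Quotient.mk P a) = Ideal.Quotient.mk Q (aeval f a) := by
    have e : (φ.toAlgHom.comp (Ideal.Quotient.mkₐ ℂ P))
        = (Ideal.Quotient.mkₐ ℂ Q).comp (aeval f) :=
      algHom_ext fun i => by simp [hf i]
    intro a; simpa using DFunLike.congr_fun e a
  have hψ : ∀ a : MvPolynomial (Fin n) ℂ,
      φ.symm (Ideal.Quotient.mk Q a) = Ideal.Quotient.mk P (aeval g a) := by
    have e : (φ.symm.toAlgHom.comp (Ideal.Quotient.mkₐ ℂ Q))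
        = (Ideal.Quotient.mkₐ ℂ P).comp (aeval g) :=
      algHom_ext fun i => by simp [hg i]
    intro a; simpa using DFunLike.congr_fun e a
  have h1 : ∀ j, aeval f (p j) ∈ Q := by
    intro j
    have hp : Ideal.Quotient.mk P (p j) = 0 :=
      Ideal.Quotient.eq_zero_iff_mem.2 (Ideal.subset_span ⟨j, rfl⟩)
    have := hφ (p j)
    rw [hp, map_zero] at this
    exact Ideal.Quotient.eq_zero_iff_mem.1 this.symm
  have h2 : ∀ j, aeval g (q j) ∈ P := by
    intro j
    have hq : Ideal.Quotient.mk Q (q j) = 0 :=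
      Ideal.Quotient.eq_zero_iff_mem.2 (Ideal.subset_span ⟨j, rfl⟩)
    have := hψ (q j)
    rw [hq, map_zero] at this
    exact Ideal.Quotient.eq_zero_iff_mem.1 this.symm
  have h3 : ∀ i, aeval g (f i) - X i ∈ P := by
    intro i
    have : Ideal.Quotient.mk P (aeval g (f i)) = Ideal.Quotient.mk P (X i) := by
      rw [← hψ (f i), hf i, AlgEquiv.symm_apply_apply]
    exact (Ideal.Quotient.mk_eq_mk_iff_sub_mem _ _).1 this
  have h4 : ∀ i, aeval f (g i) - X i ∈ Q := by
    intro i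
    have : Ideal.Quotient.mk Q (aeval f (g i)) = Ideal.Quotient.mk Q (X i) := by
      rw [← hφ (g i), hg i, AlgEquiv.apply_symm_apply]
    exact (Ideal.Quotient.mk_eq_mk_iff_sub_mem _ _).1 this
  refine ⟨((renameEquiv ℂ (Equiv.sumComm (Fin n) (Fin n))).trans (shearL g)).trans (shearR f), ?_⟩
  rw [ideal_map_trans, ideal_map_trans]
  have step1 : Ideal.map (renameEquiv ℂ (Equiv.sumComm (Fin n) (Fin n)))
      (Ideal.span
        (Set.range (fun i => rename (Sum.inl : Fin n → Fin n ⊕ Fin n) (p i)) ∪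
         Set.range (fun i : Fin n => (X (Sum.inr i) : MvPolynomial (Fin n ⊕ Fin n) ℂ))))
      = Ideal.span
        (Set.range (fun j => rename (Sum.inr : Fin n → Fin n ⊕ Fin n) (p j)) ∪
         Set.range (fun i : Fin n => (X (Sum.inl i) : MvPolynomial (Fin n ⊕ Fin n) ℂ))) := by
    rw [Ideal.map_span, Set.image_union, ← Set.range_comp, ← Set.range_comp,
      show (⇑(renameEquiv ℂ (Equiv.sumComm (Fin n) (Fin n))) ∘
          fun i => rename (Sum.inl : Fin n → Fin n ⊕ Fin n) (p i))
        = (fun j => rename (Sum.inr : Fin n → Fin n ⊕ Fin n) (p j)) from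
        funext fun j => by simp [Function.comp_def, rename_rename],
      show (⇑(renameEquiv ℂ (Equiv.sumComm (Fin n) (Fin n))) ∘
          fun i : Fin n => (X (Sum.inr i) : MvPolynomial (Fin n ⊕ Fin n) ℂ))
        = (fun i : Fin n => (X (Sum.inl i) : MvPolynomial (Fin n ⊕ Fin n) ℂ)) from
        funext fun i => by simp [Function.comp_def]]
  rw [step1]
  have step2 : Ideal.map (shearL g)
      (Ideal.span
        (Set.range (fun j => rename (Sum.inr : Fin n → Fin n ⊕ Fin n) (p j)) ∪
         Set.range (fun i : Fin n => (X (Sum.inl i) : MvPolynomial (Fin n ⊕ Fin n) ℂ))))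
      = Ideal.span
        (Set.range (fun j => rename (Sum.inr : Fin n → Fin n ⊕ Fin n) (p j)) ∪
         Set.range (fun i : Fin n =>
           (X (Sum.inl i) : MvPolynomial (Fin n ⊕ Fin n) ℂ) - rename Sum.inr (g i))) := by
    rw [Ideal.map_span, Set.image_union, ← Set.range_comp, ← Set.range_comp,
      show (⇑(shearL g) ∘ fun j => rename (Sum.inr : Fin n → Fin n ⊕ Fin n) (p j))
        = (fun j => rename (Sum.inr : Fin n → Fin n ⊕ Fin n) (p j)) from
        funext fun j => by simp [Function.comp_def],
      show (⇑(shearL g) ∘ fun i : Fin n => (X (Sum.inl i) : MvPolynomial (Fin n ⊕ Fin n) ℂ))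
        = (fun i : Fin n => (X (Sum.inl i) : MvPolynomial (Fin n ⊕ Fin n) ℂ)
            - rename Sum.inr (g i)) from
        funext fun i => by simp [Function.comp_def]]
  rw [step2]
  have key : Ideal.span
        (Set.range (fun j => rename (Sum.inr : Fin n → Fin n ⊕ Fin n) (p j)) ∪
         Set.range (fun i : Fin n =>
           (X (Sum.inl i) : MvPolynomial (Fin n ⊕ Fin n) ℂ) - rename Sum.inr (g i)))
      = Ideal.span
        (Set.range (fun j => rename (Sum.inl : Fin n → Fin n ⊕ Fin n) (q j)) ∪
         Set.range (fun i : Fin n =>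
           (X (Sum.inr i) : MvPolynomial (Fin n ⊕ Fin n) ℂ) - rename Sum.inl (f i))) :=
    le_antisymm (span_le_aux Sum.inl Sum.inr p q f g h1 h4)
      (span_le_aux Sum.inr Sum.inl q p g f h2 h3)
  rw [key]
  rw [Ideal.map_span, Set.image_union, ← Set.range_comp, ← Set.range_comp,
    show (⇑(shearR f) ∘ fun j => rename (Sum.inl : Fin n → Fin n ⊕ Fin n) (q j))
      = (fun j => rename (Sum.inl : Fin n → Fin n ⊕ Fin n) (q j)) from
      funext fun j => by simp [Function.comp_def],
    show (⇑(shearR f) ∘ fun i : Fin n =>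
        (X (Sum.inr i) : MvPolynomial (Fin n ⊕ Fin n) ℂ) - rename Sum.inl (f i))
      = (fun i : Fin n => (X (Sum.inr i) : MvPolynomial (Fin n ⊕ Fin n) ℂ)) from
      funext fun i => by simp [Function.comp_def]]
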